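/- A function ψ : F(T) → ℝ on the semigroup of finite subsets of T (with union) is negative definite in the semigroup sense if and only if it is completely alternating. That is, for all n ≥ 2, K₁,…,Kₙ ∈ F(T) and a₁,…,aₙ ∈ ℝ with Σaⱼ = 0 one has Σⱼ Σₖ aⱼ aₖ ψ(Kⱼ ∪ Kₖ) ≤ 0, if and only if for all n ≥ 1, K, K₁,…,Kₙ ∈ F(T), Σ_{I ⊆ {1,…,n}} (−1)^{|I|} ψ(K ∪ ⋃_{i∈I} Kᵢ) ≤ 0. -/

import Mathlib

open Finset

/-- `ψ` is negative definite (in the semigroup sense) on `(Finset T, ∪, ∅)`. -/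
def NegDef {T : Type*} [DecidableEq T] (ψ : Finset T → ℝ) : Prop :=
  ∀ n : ℕ, 2 ≤ n → ∀ (K : Fin n → Finset T) (a : Fin n → ℝ),
    (∑ j, a j) = 0 → ∑ j, ∑ k, a j * a k * ψ (K j ∪ K k) ≤ 0

/-- `ψ` is completely alternating on `(Finset T, ∪, ∅)`. -/
def CompAlt {T : Type*} [DecidableEq T] (ψ : Finset T → ℝ) : Prop :=
  ∀ n : ℕ, 1 ≤ n → ∀ (K : Finset T) (Ks : Fin n → Finset T),
    ∑ I ∈ (Finset.univ : Finset (Fin n)).powerset,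
      (-1 : ℝ) ^ I.card * ψ (K ∪ I.sup Ks) ≤ 0

/-- Double alternating sum over pairs of subsets collapses to a single alternating sum,
thanks to idempotence of union. -/
lemma doubleAlt {α : Type*} [DecidableEq α] (u : Finset α) (g : Finset α → ℝ) :
    ∑ I ∈ u.powerset, ∑ J ∈ u.powerset, (-1 : ℝ) ^ I.card * (-1 : ℝ) ^ J.card * g (I ∪ J)
      = ∑ M ∈ u.powerset, (-1 : ℝ) ^ M.card * g M := by
  induction u using Finset.induction_on generalizing g with
  | empty => simp
  | @insert x s hx ih =>
    simp_rw [Finset.sum_powerset_insert hx, Finset.sum_add_distrib]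
    have hmem : ∀ I ∈ s.powerset, x ∉ I := fun I hI h => hx (Finset.mem_powerset.mp hI h)
    have hcard : ∀ I ∈ s.powerset, ((insert x I).card : ℕ) = I.card + 1 := fun I hI =>
      Finset.card_insert_of_notMem (hmem I hI)
    have e12 : ∑ I ∈ s.powerset, ∑ J ∈ s.powerset,
        (-1:ℝ)^I.card * (-1:ℝ)^(insert x J).card * g (I ∪ insert x J)
        = -∑ I ∈ s.powerset, ∑ J ∈ s.powerset,
            (-1:ℝ)^I.card * (-1:ℝ)^J.card * g (insert x (I ∪ J)) := by
      rw [← Finset.sum_neg_distrib]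
      refine Finset.sum_congr rfl fun I hI => ?_
      rw [← Finset.sum_neg_distrib]
      refine Finset.sum_congr rfl fun J hJ => ?_
      rw [hcard J hJ, Finset.union_insert]; ring
    have e21 : ∑ I ∈ s.powerset, ∑ J ∈ s.powerset,
        (-1:ℝ)^(insert x I).card * (-1:ℝ)^J.card * g (insert x I ∪ J)
        = -∑ I ∈ s.powerset, ∑ J ∈ s.powerset,
            (-1:ℝ)^I.card * (-1:ℝ)^J.card * g (insert x (I ∪ J)) := by
      rw [← Finset.sum_neg_distrib]
      refine Finset.sum_congr rfl fun I hI => ?_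
      rw [← Finset.sum_neg_distrib]
      refine Finset.sum_congr rfl fun J hJ => ?_
      rw [hcard I hI, Finset.insert_union]; ring
    have e22 : ∑ I ∈ s.powerset, ∑ J ∈ s.powerset,
        (-1:ℝ)^(insert x I).card * (-1:ℝ)^(insert x J).card * g (insert x I ∪ insert x J)
        = ∑ I ∈ s.powerset, ∑ J ∈ s.powerset,
            (-1:ℝ)^I.card * (-1:ℝ)^J.card * g (insert x (I ∪ J)) := by
      refine Finset.sum_congr rfl fun I hI => Finset.sum_congr rfl fun J hJ => ?_
      rw [hcard I hI, hcard J hJ]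
      have : insert x I ∪ insert x J = insert x (I ∪ J) := by
        rw [Finset.insert_union, Finset.union_insert, Finset.insert_idem]
      rw [this]; ring
    have erhs : ∑ M ∈ s.powerset, (-1:ℝ)^(insert x M).card * g (insert x M)
        = -∑ M ∈ s.powerset, (-1:ℝ)^M.card * g (insert x M) := by
      rw [← Finset.sum_neg_distrib]
      refine Finset.sum_congr rfl fun M hM => ?_
      rw [hcard M hM]; ring
    rw [e12, e21, e22, erhs, ih g, ih (fun M => g (insert x M))]
    ring

/-- Möbius-type inversion on the Boolean lattice. -/
lemma invAlt {α : Type*} [DecidableEq α] (V : Finset α) (g : Finset α → ℝ) :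
    ∑ B ∈ V.powerset, ∑ C ∈ (V \ B).powerset, (-1:ℝ)^C.card * g (B ∪ C) = g ∅ := by
  induction V using Finset.induction_on generalizing g with
  | empty => simp
  | @insert x s hx ih =>
    rw [Finset.sum_powerset_insert hx]
    have part1 : ∑ B ∈ s.powerset, ∑ C ∈ (insert x s \ B).powerset, (-1:ℝ)^C.card * g (B ∪ C)
        = (∑ B ∈ s.powerset, ∑ C ∈ (s \ B).powerset, (-1:ℝ)^C.card * g (B ∪ C))
          + -∑ B ∈ s.powerset, ∑ C ∈ (s \ B).powerset, (-1:ℝ)^C.card * g (insert x (B ∪ C)) := by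
      rw [← Finset.sum_neg_distrib, ← Finset.sum_add_distrib]
      refine Finset.sum_congr rfl fun B hB => ?_
      have hxB : x ∉ B := fun h => hx (Finset.mem_powerset.mp hB h)
      have hsd : insert x s \ B = insert x (s \ B) := by
        ext y
        simp only [Finset.mem_sdiff, Finset.mem_insert]
        constructor
        · rintro ⟨hy1 | hy1, hy2⟩
          · exact Or.inl hy1
          · exact Or.inr ⟨hy1, hy2⟩
        · rintro (hy1 | ⟨hy1, hy2⟩)
          · exact ⟨Or.inl hy1, hy1 ▸ hxB⟩
          · exact ⟨Or.inr hy1, hy2⟩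
      have hxsB : x ∉ s \ B := fun h => hx (Finset.mem_sdiff.mp h).1
      rw [hsd, Finset.sum_powerset_insert hxsB, ← Finset.sum_neg_distrib]
      congr 1
      refine Finset.sum_congr rfl fun C hC => ?_
      have hxC : x ∉ C := fun h => hxsB (Finset.mem_powerset.mp hC h)
      rw [Finset.card_insert_of_notMem hxC, Finset.union_insert]
      ring
    have part2 : ∑ B ∈ s.powerset, ∑ C ∈ (insert x s \ insert x B).powerset,
          (-1:ℝ)^C.card * g (insert x B ∪ C)
        = ∑ B ∈ s.powerset, ∑ C ∈ (s \ B).powerset, (-1:ℝ)^C.card * g (insert x (B ∪ C)) := by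
      refine Finset.sum_congr rfl fun B hB => ?_
      have hsd : insert x s \ insert x B = s \ B := by
        ext y
        simp only [Finset.mem_sdiff, Finset.mem_insert, not_or]
        constructor
        · rintro ⟨hy1 | hy1, hy2, hy3⟩
          · exact absurd hy1 hy2
          · exact ⟨hy1, hy3⟩
        · rintro ⟨hy1, hy3⟩
          exact ⟨Or.inr hy1, fun h => hx (h ▸ hy1), hy3⟩
      rw [hsd]
      exact Finset.sum_congr rfl fun C hC => by rw [Finset.insert_union]
    rw [part1, part2, ih g]
    ring

/-- A completely alternating function has nonpositive alternating sums over
arbitrary nonempty finsets of "increments". -/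
lemma altSum_nonpos {T : Type*} [DecidableEq T] {ψ : Finset T → ℝ} (h : CompAlt ψ)
    (B V : Finset T) (hV : V.Nonempty) :
    ∑ C ∈ V.powerset, (-1:ℝ)^C.card * ψ (B ∪ C) ≤ 0 := by
  classical
  set m := V.card with hm
  have hm1 : 1 ≤ m := Finset.card_pos.mpr hV
  let e := V.equivFin
  let f : Fin m → T := fun i => (e.symm i : T)
  have hfinj : Function.Injective f := fun i j hij => by
    have : e.symm i = e.symm j := Subtype.ext hij
    exact e.symm.injective this
  have hfmem : ∀ i, f i ∈ V := fun i => (e.symm i).2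
  have hsurj : ∀ c ∈ V, ∃ i, f i = c := fun c hc => ⟨e ⟨c, hc⟩, by simp [f]⟩
  let Ks : Fin m → Finset T := fun i => {f i}
  have key := h m hm1 B Ks
  have heq : ∑ I ∈ (Finset.univ : Finset (Fin m)).powerset,
      (-1 : ℝ) ^ I.card * ψ (B ∪ I.sup Ks)
      = ∑ C ∈ V.powerset, (-1:ℝ)^C.card * ψ (B ∪ C) := by
    refine Finset.sum_bij' (fun I _ => I.image f)
      (fun C _ => Finset.univ.filter (fun k => f k ∈ C)) ?_ ?_ ?_ ?_ ?_
    · intro I _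
      exact Finset.mem_powerset.mpr fun y hy => by
        obtain ⟨i, _, rfl⟩ := Finset.mem_image.mp hy
        exact hfmem i
    · intro C _
      exact Finset.mem_powerset.mpr (Finset.subset_univ _)
    · intro I _
      ext k
      simp only [Finset.mem_filter, Finset.mem_univ, true_and, Finset.mem_image]
      constructor
      · rintro ⟨i, hi, hik⟩
        rwa [← hfinj hik]
      · intro hk; exact ⟨k, hk, rfl⟩
    · intro C hC
      ext c
      simp only [Finset.mem_image, Finset.mem_filter, Finset.mem_univ, true_and]
      constructor
      · rintro ⟨i, hi, rfl⟩; exact hi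
      · intro hc
        obtain ⟨i, rfl⟩ := hsurj c (Finset.mem_powerset.mp hC hc)
        exact ⟨i, hc, rfl⟩
    · intro I _
      rw [Finset.card_image_of_injective _ hfinj, Finset.sup_singleton_apply]
  linarith [heq ▸ key]

/-- Decomposition of `ψ` on subsets of `U` as a combination of "upper set" indicators. -/
lemma decomp {T : Type*} [DecidableEq T] (ψ : Finset T → ℝ) (U S : Finset T) (hS : S ⊆ U) :
    ψ S = ∑ B ∈ U.powerset,
      (if S ⊆ B then (∑ C ∈ (U \ B).powerset, (-1:ℝ)^C.card * ψ (B ∪ C)) else 0) := by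
  rw [← Finset.sum_filter]
  have key : ∑ B ∈ U.powerset.filter (fun B => S ⊆ B),
        ∑ C ∈ (U \ B).powerset, (-1:ℝ)^C.card * ψ (B ∪ C)
      = ∑ B' ∈ (U \ S).powerset,
        ∑ C ∈ ((U \ S) \ B').powerset, (-1:ℝ)^C.card * ψ ((S ∪ B') ∪ C) := by
    refine Finset.sum_bij' (fun B _ => B \ S) (fun B' _ => S ∪ B') ?_ ?_ ?_ ?_ ?_
    · intro B hB
      obtain ⟨hBU, hSB⟩ := Finset.mem_filter.mp hB
      exact Finset.mem_powerset.mpr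
        (Finset.sdiff_subset_sdiff (Finset.mem_powerset.mp hBU) le_rfl)
    · intro B' hB'
      have hB'U : B' ⊆ U \ S := Finset.mem_powerset.mp hB'
      refine Finset.mem_filter.mpr ⟨Finset.mem_powerset.mpr ?_, Finset.subset_union_left⟩
      exact Finset.union_subset hS (hB'U.trans (Finset.sdiff_subset))
    · intro B hB
      exact Finset.union_sdiff_of_subset (Finset.mem_filter.mp hB).2
    · intro B' hB'
      have : Disjoint S B' :=
        Finset.disjoint_of_subset_right (Finset.mem_powerset.mp hB') Finset.sdiff_disjoint.symm
      exact Finset.union_sdiff_cancel_left this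
    · intro B hB
      obtain ⟨hBU, hSB⟩ := Finset.mem_filter.mp hB
      have h1 : S ∪ B \ S = B := Finset.union_sdiff_of_subset hSB
      have h2 : (U \ S) \ (B \ S) = U \ B := by
        ext y
        simp only [Finset.mem_sdiff, not_and, not_not]
        constructor
        · rintro ⟨⟨hyU, hyS⟩, hy⟩
          exact ⟨hyU, fun hyB => hyS (hy hyB)⟩
        · rintro ⟨hyU, hyB⟩
          exact ⟨⟨hyU, fun hyS => hyB (hSB hyS)⟩, fun h => (hyB h).elim⟩
      rw [h1, h2]
  rw [key]
  have h3 := invAlt (U \ S) (fun X => ψ (S ∪ X))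
  simp only [Finset.union_assoc]
  rw [h3]
  simp

lemma powAltSum {α : Type*} [DecidableEq α] (u : Finset α) :
    ∑ I ∈ u.powerset, (-1:ℝ)^I.card = if u = ∅ then 1 else 0 := by
  induction u using Finset.induction_on with
  | empty => simp
  | @insert x s hx ih =>
    rw [Finset.sum_powerset_insert hx, ih]
    have : ∑ I ∈ s.powerset, (-1:ℝ)^(insert x I).card
        = -∑ I ∈ s.powerset, (-1:ℝ)^I.card := by
      rw [← Finset.sum_neg_distrib]
      refine Finset.sum_congr rfl fun I hI => ?_
      rw [Finset.card_insert_of_notMem (fun h => hx (Finset.mem_powerset.mp hI h))]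
      ring
    rw [this, ih]
    simp [Finset.insert_ne_empty]

lemma negDef_fintype {T : Type*} [DecidableEq T] {ψ : Finset T → ℝ} (h : NegDef ψ)
    {ι : Type*} [Fintype ι] (hι : 2 ≤ Fintype.card ι) (K : ι → Finset T) (a : ι → ℝ)
    (ha : ∑ i, a i = 0) : ∑ j, ∑ k, a j * a k * ψ (K j ∪ K k) ≤ 0 := by
  let e := Fintype.equivFin ι
  have ha' : ∑ i, a (e.symm i) = 0 := by rw [Equiv.sum_comp e.symm a]; exact ha
  have key := h (Fintype.card ι) hι (fun i => K (e.symm i)) (fun i => a (e.symm i)) ha'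
  calc ∑ j, ∑ k, a j * a k * ψ (K j ∪ K k)
      = ∑ j, ∑ k, a (e.symm j) * a (e.symm k) * ψ (K (e.symm j) ∪ K (e.symm k)) := by
        rw [← Equiv.sum_comp e.symm (fun j => ∑ k, a j * a k * ψ (K j ∪ K k))]
        exact Finset.sum_congr rfl fun j _ =>
          (Equiv.sum_comp e.symm (fun k => a (e.symm j) * a k * ψ (K (e.symm j) ∪ K k))).symm
    _ ≤ 0 := key

/-- On the idempotent semigroup of finite subsets of `T` under union, a real-valued
function is negative definite if and only if it is completely alternating. -/
theorem negDef_iff_compAlt {T : Type*} [DecidableEq T] (ψ : Finset T → ℝ) :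
    NegDef ψ ↔ CompAlt ψ := by
  constructor
  · -- NegDef → CompAlt
    intro h n hn K Ks
    have hcard : 2 ≤ Fintype.card (Finset (Fin n)) := by
      rw [Fintype.card_finset, Fintype.card_fin]
      calc 2 = 2 ^ 1 := rfl
        _ ≤ 2 ^ n := Nat.pow_le_pow_right (by norm_num) hn
    have hu : (Finset.univ : Finset (Fin n)) ≠ ∅ := by
      intro hcontr
      exact (Finset.univ_eq_empty_iff.mp hcontr).false ⟨0, hn⟩
    have ha : ∑ I : Finset (Fin n), (-1:ℝ)^I.card = 0 := by
      rw [← Finset.powerset_univ, powAltSum, if_neg hu]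
    have key := negDef_fintype h hcard (fun I => K ∪ I.sup Ks) (fun I => (-1:ℝ)^I.card) ha
    have hun : ∀ I J : Finset (Fin n),
        (K ∪ I.sup Ks) ∪ (K ∪ J.sup Ks) = K ∪ (I ∪ J).sup Ks := by
      intro I J
      rw [Finset.sup_union, Finset.sup_eq_union, Finset.union_union_union_comm,
        Finset.union_self]
    have dd := doubleAlt (Finset.univ : Finset (Fin n)) (fun M => ψ (K ∪ M.sup Ks))
    rw [Finset.powerset_univ] at dd
    rw [Finset.powerset_univ, ← dd]
    refine le_trans (le_of_eq ?_) key
    refine Finset.sum_congr rfl fun I _ => Finset.sum_congr rfl fun J _ => ?_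
    rw [hun I J]
  · -- CompAlt → NegDef
    intro h n hn K a ha
    set U := Finset.univ.sup K with hU
    have hKU : ∀ j, K j ⊆ U := fun j => Finset.le_sup (Finset.mem_univ j)
    set c : Finset T → ℝ := fun B => ∑ C ∈ (U \ B).powerset, (-1:ℝ)^C.card * ψ (B ∪ C)
      with hc
    set t : Finset T → Fin n → ℝ := fun B j => if K j ⊆ B then a j else 0 with ht
    have step : ∑ j, ∑ k, a j * a k * ψ (K j ∪ K k)
        = ∑ B ∈ U.powerset, c B * (∑ j, t B j)^2 := by
      calc ∑ j, ∑ k, a j * a k * ψ (K j ∪ K k)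
          = ∑ j, ∑ k, ∑ B ∈ U.powerset, a j * a k * (if K j ∪ K k ⊆ B then c B else 0) := by
            refine Finset.sum_congr rfl fun j _ => Finset.sum_congr rfl fun k _ => ?_
            rw [← Finset.mul_sum,
              ← decomp ψ U (K j ∪ K k) (Finset.union_subset (hKU j) (hKU k))]
        _ = ∑ j, ∑ B ∈ U.powerset, ∑ k, a j * a k * (if K j ∪ K k ⊆ B then c B else 0) :=
            Finset.sum_congr rfl fun j _ => Finset.sum_comm
        _ = ∑ B ∈ U.powerset, ∑ j, ∑ k, a j * a k * (if K j ∪ K k ⊆ B then c B else 0) :=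
            Finset.sum_comm
        _ = ∑ B ∈ U.powerset, c B * (∑ j, t B j)^2 := by
            refine Finset.sum_congr rfl fun B _ => ?_
            rw [sq, Finset.sum_mul_sum, Finset.mul_sum]
            refine Finset.sum_congr rfl fun j _ => ?_
            rw [Finset.mul_sum]
            refine Finset.sum_congr rfl fun k _ => ?_
            by_cases h1 : K j ⊆ B
            all_goals by_cases h2 : K k ⊆ B
            all_goals simp [ht, h1, h2, Finset.union_subset_iff]
            ring
    rw [step]
    refine Finset.sum_nonpos fun B hB => ?_
    by_cases hBU : B = U
    · have : ∑ j, t B j = 0 := by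
        rw [← ha]
        refine Finset.sum_congr rfl fun j _ => ?_
        rw [ht]; simp [hBU, hKU j]
      rw [this]
      simp
    · have hVne : (U \ B).Nonempty := by
        rw [Finset.sdiff_nonempty]
        intro hUB
        exact hBU (Finset.Subset.antisymm (Finset.mem_powerset.mp hB) hUB)
      have hcB : c B ≤ 0 := altSum_nonpos h B (U \ B) hVne
      exact mul_nonpos_of_nonpos_of_nonneg hcB (sq_nonneg _)
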